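/- Let μ_m, μ_f, μ_fw > 0, β ∈ [0,1), q ∈ [0,1], F_w*, M_w* > 0, λ₀ > 0 with μ_fw = (λ₀/(M_w* + F_w*))·(1−β)·M_w*, and suppose (1−β)μ_f > (1−q)μ_fw. Then the system of equations μ_m M¹ = (λ₀/(M_w* + F_w*))·[(1−β)M_w* F_w* + (1−q)M_w* F¹] and μ_f F¹ = (λ₀/(M_w* + F_w*))·[(1−β)M_w* F_w* + (1−q)M_w* F¹] has the unique solution F¹ = (1−β)μ_fw F_w* / ((1−β)μ_f − (1−q)μ_fw) and M¹ = μ_fw μ_f (1−β) F_w* / (μ_m[(1−β)μ_f − (1−q)μ_fw]), and both F¹ > 0 and M¹ > 0. In particular M¹/F¹ = μ_f/μ_m. -/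

import Mathlib

/-!
STATEMENT 14: The first-order perturbation equations for the coexistence
equilibrium near the boundary equilibrium `(0,0,M_w*,F_w*)` have the unique
solution `F¹ = (1−β)μ_fw F_w*/((1−β)μ_f − (1−q)μ_fw)`,
`M¹ = μ_fw μ_f (1−β) F_w*/(μ_m[(1−β)μ_f − (1−q)μ_fw])`, both positive,
and `M¹/F¹ = μ_f/μ_m`.
-/

theorem perturbation_first_order_coefficients
    (μm μf μfw β q Mws Fws lam0 : ℝ)
    (hμm : 0 < μm) (hμf : 0 < μf) (hμfw : 0 < μfw)
    (hβ : 0 ≤ β ∧ β < 1) (hq : 0 ≤ q ∧ q ≤ 1)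
    (hMws : 0 < Mws) (hFws : 0 < Fws) (hlam0 : 0 < lam0)
    (hrel : μfw = lam0 / (Mws + Fws) * ((1 - β) * Mws))
    (hcond : (1 - q) * μfw < (1 - β) * μf) :
    let F1 : ℝ := (1 - β) * μfw * Fws / ((1 - β) * μf - (1 - q) * μfw)
    let M1 : ℝ := μfw * μf * (1 - β) * Fws /
      (μm * ((1 - β) * μf - (1 - q) * μfw))
    (μm * M1 = lam0 / (Mws + Fws) *
      ((1 - β) * Mws * Fws + (1 - q) * Mws * F1)) ∧
    (μf * F1 = lam0 / (Mws + Fws) *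
      ((1 - β) * Mws * Fws + (1 - q) * Mws * F1)) ∧
    (∀ M' F' : ℝ,
      μm * M' = lam0 / (Mws + Fws) *
        ((1 - β) * Mws * Fws + (1 - q) * Mws * F') →
      μf * F' = lam0 / (Mws + Fws) *
        ((1 - β) * Mws * Fws + (1 - q) * Mws * F') →
      M' = M1 ∧ F' = F1) ∧
    0 < F1 ∧ 0 < M1 ∧ M1 / F1 = μf / μm := by
  intro F1 M1
  set c : ℝ := lam0 / (Mws + Fws) with hc
  have hβ1 : (0:ℝ) < 1 - β := by linarith [hβ.2]
  have hD : 0 < (1 - β) * μf - (1 - q) * μfw := by linarith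
  have hF1 : F1 = (1 - β) * μfw * Fws / ((1 - β) * μf - (1 - q) * μfw) := rfl
  have hM1 : M1 = μfw * μf * (1 - β) * Fws /
      (μm * ((1 - β) * μf - (1 - q) * μfw)) := rfl
  have hF1pos : 0 < F1 := by rw [hF1]; positivity
  have hM1pos : 0 < M1 := by rw [hM1]; positivity
  have hkey : ((1 - β) * μf - (1 - q) * μfw) * F1 = (1 - β) * μfw * Fws := by
    rw [hF1, mul_div_cancel₀ _ hD.ne']
  have h2 : μf * F1 = c * ((1 - β) * Mws * Fws + (1 - q) * Mws * F1) := by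
    have h2' : (1 - β) * (μf * F1) =
        (1 - β) * (c * ((1 - β) * Mws * Fws + (1 - q) * Mws * F1)) := by
      linear_combination hkey + ((1 - β) * Fws + (1 - q) * F1) * hrel
    exact mul_left_cancel₀ hβ1.ne' h2'
  have hMF : μm * M1 = μf * F1 := by
    rw [hF1, hM1]
    field_simp
  have h1 : μm * M1 = c * ((1 - β) * Mws * Fws + (1 - q) * Mws * F1) :=
    hMF.trans h2
  refine ⟨h1, h2, ?_, hF1pos, hM1pos, ?_⟩
  · intro M' F' hM' hF'
    have hDF' : ((1 - β) * μf - (1 - q) * μfw) * F' = (1 - β) * μfw * Fws := by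
      linear_combination (1 - β) * hF' - ((1 - β) * Fws + (1 - q) * F') * hrel
    have hF'eq : F' = F1 := by
      rw [hF1, eq_div_iff hD.ne']
      linarith [hDF']
    have hM'eq : M' = M1 := by
      have : μm * M' = μm * M1 := by
        rw [hM', hF'eq]; exact h1.symm
      exact mul_left_cancel₀ hμm.ne' this
    exact ⟨hM'eq, hF'eq⟩
  · rw [hF1, hM1]
    field_simp [hD.ne']
    exact div_self (by linarith : 0 < μf * (1 - β) - μfw * (1 - q)).ne'
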